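/- Suppose d(j), N(j) are sequences of positive integers with d(j) ≤ N(j), d(j) → ∞, and d(j)/N(j) → δ as j → ∞, where 0 ≤ δ < 1/2. Then (1/binom(N(j)−1, d(j)−1))·∑_{i=0}^{d(j)-2} binom(N(j)−1, i) → δ/(1−2δ) as j → ∞. -/

import Mathlib

open Filter Finset

private lemma choose_pred_eq (n i : ℕ) (h1 : 1 ≤ i) (h2 : i ≤ n) :
    (n.choose (i-1) : ℝ) * ((n:ℝ) - i + 1) = (n.choose i : ℝ) * i := by
  have h := Nat.choose_succ_right_eq n (i-1)
  rw [Nat.sub_add_cancel h1] at h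
  have h3 : i - 1 ≤ n := le_trans (Nat.sub_le _ _) h2
  have hc : ((n - (i-1) : ℕ) : ℝ) = (n:ℝ) - i + 1 := by
    push_cast [Nat.cast_sub h3, Nat.cast_sub h1]
    ring
  have := congrArg (fun x : ℕ => (x:ℝ)) h
  push_cast at this
  rw [Nat.cast_sub h3] at this
  push_cast [Nat.cast_sub h1] at this
  rw [this]; ring

private lemma choose_upper_term (n k : ℕ) (hk : k ≤ n) :
    ∀ m, m ≤ k → (n.choose (k-m) : ℝ) ≤ ((k:ℝ)/((n:ℝ)-k+1))^m * n.choose k := by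
  have hkn : (k:ℝ) ≤ n := Nat.cast_le.2 hk
  have hden : (0:ℝ) < (n:ℝ) - k + 1 := by linarith
  intro m
  induction m with
  | zero => simp
  | succ m ih =>
    intro hm
    have hm' : m ≤ k := Nat.le_of_succ_le hm
    have hmk : m < k := hm
    set i : ℕ := k - m with hi
    have hi1 : 1 ≤ i := by omega
    have hin : i ≤ n := by omega
    have hcast : (i:ℝ) = (k:ℝ) - m := by
      rw [hi, Nat.cast_sub hm']
    have hsub : k - (m+1) = i - 1 := by omega
    have hdi : (0:ℝ) < (n:ℝ) - i + 1 := by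
      have : (i:ℝ) ≤ n := Nat.cast_le.2 hin
      linarith
    have heq := choose_pred_eq n i hi1 hin
    have hval : (n.choose (i-1) : ℝ) = (n.choose i : ℝ) * i / ((n:ℝ) - i + 1) := by
      field_simp
      linarith [heq]
    have hratio : (i:ℝ) / ((n:ℝ) - i + 1) ≤ (k:ℝ)/((n:ℝ)-k+1) := by
      rw [div_le_div_iff₀ hdi hden]
      have hm0 : (0:ℝ) ≤ m := Nat.cast_nonneg m
      nlinarith [hcast]
    have hchoosepos : (0:ℝ) ≤ (n.choose i : ℝ) := Nat.cast_nonneg _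
    have hrpos : (0:ℝ) ≤ (k:ℝ)/((n:ℝ)-k+1) := div_nonneg (Nat.cast_nonneg k) hden.le
    calc (n.choose (k-(m+1)) : ℝ) = (n.choose i : ℝ) * i / ((n:ℝ) - i + 1) := by rw [hsub, hval]
      _ = (n.choose i : ℝ) * ((i:ℝ) / ((n:ℝ) - i + 1)) := by ring
      _ ≤ (n.choose i : ℝ) * ((k:ℝ)/((n:ℝ)-k+1)) := by
          exact mul_le_mul_of_nonneg_left hratio hchoosepos
      _ ≤ (((k:ℝ)/((n:ℝ)-k+1))^m * n.choose k) * ((k:ℝ)/((n:ℝ)-k+1)) := by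
          exact mul_le_mul_of_nonneg_right (ih hm') hrpos
      _ = ((k:ℝ)/((n:ℝ)-k+1))^(m+1) * n.choose k := by ring

private lemma choose_lower_term (n k M : ℕ) (hk : k ≤ n) (hM : M ≤ k) (hM1 : 1 ≤ M) :
    ∀ m, m ≤ M → (((k:ℝ)-M+1)/((n:ℝ)-k+M))^m * n.choose k ≤ (n.choose (k-m) : ℝ) := by
  have hkn : (k:ℝ) ≤ n := Nat.cast_le.2 hk
  have hMk : (M:ℝ) ≤ k := Nat.cast_le.2 hM
  have hM1' : (1:ℝ) ≤ M := by exact_mod_cast hM1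
  have hden : (0:ℝ) < (n:ℝ) - k + M := by linarith
  have hs0 : (0:ℝ) ≤ ((k:ℝ)-M+1)/((n:ℝ)-k+M) := by
    apply div_nonneg _ hden.le; linarith
  intro m
  induction m with
  | zero => simp
  | succ m ih =>
    intro hm
    have hm' : m ≤ M := Nat.le_of_succ_le hm
    have hmk : m < k := by omega
    set i : ℕ := k - m with hi
    have hi1 : 1 ≤ i := by omega
    have hin : i ≤ n := by omega
    have hcast : (i:ℝ) = (k:ℝ) - m := by
      rw [hi, Nat.cast_sub (by omega : m ≤ k)]
    have hsub : k - (m+1) = i - 1 := by omega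
    have hdi : (0:ℝ) < (n:ℝ) - i + 1 := by
      have : (i:ℝ) ≤ n := Nat.cast_le.2 hin
      linarith
    have heq := choose_pred_eq n i hi1 hin
    have hval : (n.choose (i-1) : ℝ) = (n.choose i : ℝ) * i / ((n:ℝ) - i + 1) := by
      field_simp
      linarith [heq]
    have hm1M : (m:ℝ) + 1 ≤ M := by exact_mod_cast hm
    have hratio : ((k:ℝ)-M+1)/((n:ℝ)-k+M) ≤ (i:ℝ) / ((n:ℝ) - i + 1) := by
      rw [div_le_div_iff₀ hden hdi]
      nlinarith [hcast]
    calc (((k:ℝ)-M+1)/((n:ℝ)-k+M))^(m+1) * n.choose k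
        = (((k:ℝ)-M+1)/((n:ℝ)-k+M)) * ((((k:ℝ)-M+1)/((n:ℝ)-k+M))^m * n.choose k) := by ring
      _ ≤ (((k:ℝ)-M+1)/((n:ℝ)-k+M)) * (n.choose i : ℝ) :=
          mul_le_mul_of_nonneg_left (ih hm') hs0
      _ ≤ ((i:ℝ) / ((n:ℝ) - i + 1)) * (n.choose i : ℝ) :=
          mul_le_mul_of_nonneg_right hratio (Nat.cast_nonneg _)
      _ = (n.choose i : ℝ) * i / ((n:ℝ) - i + 1) := by ring
      _ = (n.choose (k-(m+1)) : ℝ) := by rw [hsub, hval]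

private lemma sum_upper (n k : ℕ) (hk1 : 1 ≤ k) (hk : k ≤ n)
    (hr1 : (k:ℝ)/((n:ℝ)-k+1) < 1) :
    ∑ i ∈ Finset.range k, (n.choose i : ℝ) ≤
      (((k:ℝ)/((n:ℝ)-k+1)) / (1 - (k:ℝ)/((n:ℝ)-k+1))) * n.choose k := by
  set R : ℝ := (k:ℝ)/((n:ℝ)-k+1) with hR
  have hkn : (k:ℝ) ≤ n := Nat.cast_le.2 hk
  have hden : (0:ℝ) < (n:ℝ) - k + 1 := by linarith
  have hR0 : 0 ≤ R := div_nonneg (Nat.cast_nonneg k) hden.le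
  have h1 : ∑ i ∈ Finset.range k, (n.choose i : ℝ) =
      ∑ m ∈ Finset.range k, (n.choose (k - 1 - m) : ℝ) :=
    (Finset.sum_range_reflect (fun i => (n.choose i : ℝ)) k).symm
  rw [h1]
  have h2 : ∑ m ∈ Finset.range k, (n.choose (k - 1 - m) : ℝ) ≤
      ∑ m ∈ Finset.range k, R^(m+1) * n.choose k := by
    apply Finset.sum_le_sum
    intro m hm
    have : k - 1 - m = k - (m+1) := by omega
    rw [this]
    exact choose_upper_term n k hk (m+1) (by simp at hm; omega)
  refine h2.trans ?_
  rw [← Finset.sum_mul]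
  apply mul_le_mul_of_nonneg_right _ (Nat.cast_nonneg _)
  have h3 : ∑ m ∈ Finset.range k, R^(m+1) = R * ∑ m ∈ Finset.range k, R^m := by
    rw [Finset.mul_sum]; exact Finset.sum_congr rfl (fun m _ => by ring)
  rw [h3]
  have hgeom : ∑ m ∈ Finset.range k, R^m ≤ 1/(1-R) := by
    have hs := hasSum_geometric_of_lt_one hR0 hr1
    have := sum_le_hasSum (Finset.range k) (fun i _ => pow_nonneg hR0 i) hs
    simpa using this
  calc R * ∑ m ∈ Finset.range k, R^m ≤ R * (1/(1-R)) :=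
        mul_le_mul_of_nonneg_left hgeom hR0
    _ = R / (1-R) := by ring

private lemma sum_lower (n k M : ℕ) (hk : k ≤ n) (hM : M ≤ k) (hM1 : 1 ≤ M) :
    (∑ m ∈ Finset.range M, (((k:ℝ)-M+1)/((n:ℝ)-k+M))^(m+1)) * n.choose k ≤
      ∑ i ∈ Finset.range k, (n.choose i : ℝ) := by
  rw [Finset.sum_mul]
  have h1 : ∀ m ∈ Finset.range M,
      (((k:ℝ)-M+1)/((n:ℝ)-k+M))^(m+1) * n.choose k ≤ (n.choose (k-1-m) : ℝ) := by
    intro m hm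
    simp only [Finset.mem_range] at hm
    have : k - 1 - m = k - (m+1) := by omega
    rw [this]
    exact choose_lower_term n k M hk hM hM1 (m+1) hm
  refine (Finset.sum_le_sum h1).trans ?_
  have hinj : ∀ x ∈ Finset.range M, ∀ y ∈ Finset.range M,
      k - 1 - x = k - 1 - y → x = y := by
    intro a ha b hb hab
    simp only [Finset.mem_range] at ha hb
    omega
  rw [← Finset.sum_image (g := fun m => k - 1 - m) (f := fun i => (n.choose i : ℝ)) hinj]
  apply Finset.sum_le_sum_of_subset_of_nonneg
  · intro x hx
    simp only [Finset.mem_image, Finset.mem_range] at hx ⊢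
    omega
  · intro i _ _
    exact Nat.cast_nonneg _

private lemma ratio_tendsto (d N : ℕ → ℕ) (δ c : ℝ) (hc : 1 ≤ c)
    (hpos : ∀ j, 0 < d j) (hdN : ∀ j, d j ≤ N j)
    (hd : Tendsto (fun j => d j) atTop atTop)
    (hδ : Tendsto (fun j => (d j : ℝ) / (N j : ℝ)) atTop (nhds δ))
    (hδ1 : δ < 1) :
    Tendsto (fun j => ((d j:ℝ) - c)/((N j:ℝ) - d j + c)) atTop (nhds (δ/(1-δ))) := by
  have hNat : Tendsto (fun j => N j) atTop atTop := tendsto_atTop_mono hdN hd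
  have hN : Tendsto (fun j => (N j:ℝ)) atTop atTop :=
    tendsto_natCast_atTop_atTop.comp hNat
  have hinv : Tendsto (fun j => (N j:ℝ)⁻¹) atTop (nhds 0) := hN.inv_tendsto_atTop
  have hnum : Tendsto (fun j => (d j:ℝ)/(N j) - c * (N j:ℝ)⁻¹) atTop (nhds (δ - c*0)) :=
    hδ.sub (hinv.const_mul c)
  have hden : Tendsto (fun j => 1 - (d j:ℝ)/(N j) + c * (N j:ℝ)⁻¹) atTop
      (nhds (1 - δ + c*0)) := ((tendsto_const_nhds.sub hδ).add (hinv.const_mul c))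
  have hne : 1 - δ + c*0 ≠ 0 := by
    simp only [mul_zero, add_zero]
    linarith
  have h := hnum.div hden hne
  simp only [mul_zero, sub_zero, add_zero] at h
  apply h.congr
  intro j
  have hN0 : (0:ℝ) < (N j:ℝ) := by
    have : 0 < N j := lt_of_lt_of_le (hpos j) (hdN j)
    exact_mod_cast this
  have hdj : (d j:ℝ) ≤ N j := Nat.cast_le.2 (hdN j)
  have hden0 : (0:ℝ) < (N j:ℝ) - d j + c := by linarith
  simp only [Pi.div_apply]
  field_simp

theorem binom_sum_ratio_limit (d N : ℕ → ℕ) (δ : ℝ)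
    (hpos : ∀ j, 0 < d j) (hdN : ∀ j, d j ≤ N j)
    (hd : Tendsto (fun j => d j) atTop atTop)
    (hδ : Tendsto (fun j => (d j : ℝ) / (N j : ℝ)) atTop (nhds δ))
    (hδ0 : 0 ≤ δ) (hδhalf : δ < 1 / 2) :
    Tendsto (fun j =>
        (∑ i ∈ Finset.range (d j - 1), ((N j - 1).choose i : ℝ)) /
          ((N j - 1).choose (d j - 1) : ℝ))
      atTop (nhds (δ / (1 - 2 * δ))) := by
  have hδ1 : δ < 1 := by linarith
  have h1δ : (0:ℝ) < 1 - δ := by linarith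
  have h2δ : (0:ℝ) < 1 - 2*δ := by linarith
  set r : ℝ := δ/(1-δ) with hrdef
  have hr0 : 0 ≤ r := div_nonneg hδ0 h1δ.le
  have hr1 : r < 1 := by rw [hrdef, div_lt_one h1δ]; linarith
  have hL : δ/(1-2*δ) = r/(1-r) := by
    have e1 : (1:ℝ)-δ ≠ 0 := h1δ.ne'
    have h1r : (0:ℝ) < 1 - r := by linarith
    rw [div_eq_div_iff h2δ.ne' h1r.ne', hrdef]
    field_simp
    ring
  rw [hL]
  have hrj := ratio_tendsto d N δ 1 le_rfl hpos hdN hd hδ hδ1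
  rw [← hrdef] at hrj
  refine tendsto_order.2 ⟨?_, ?_⟩
  · -- lower bound side
    intro a ha
    have hgeom : Tendsto (fun M => ∑ m ∈ Finset.range M, r^(m+1)) atTop (nhds (r/(1-r))) := by
      have hs := (hasSum_geometric_of_lt_one hr0 hr1).tendsto_sum_nat
      have h2 := hs.const_mul r
      have heq : ∀ M, r * ∑ m ∈ Finset.range M, r^m = ∑ m ∈ Finset.range M, r^(m+1) := by
        intro M
        rw [Finset.mul_sum]
        exact Finset.sum_congr rfl (fun m _ => by ring)
      have h3 : r * (1-r)⁻¹ = r/(1-r) := by rw [div_eq_mul_inv]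
      rw [← h3]
      exact h2.congr heq
    have hev : ∀ᶠ M in atTop, a < ∑ m ∈ Finset.range M, r^(m+1) :=
      hgeom.eventually (eventually_gt_nhds ha)
    obtain ⟨M0, hM0⟩ := hev.exists_forall_of_atTop
    set M := max M0 1 with hMdef
    have hM1 : 1 ≤ M := le_max_right _ _
    have hMa : a < ∑ m ∈ Finset.range M, r^(m+1) := hM0 M (le_max_left _ _)
    have hsj := ratio_tendsto d N δ M (by exact_mod_cast hM1) hpos hdN hd hδ hδ1
    rw [← hrdef] at hsj
    have hsum : Tendsto (fun j => ∑ m ∈ Finset.range M,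
        (((d j:ℝ) - M)/((N j:ℝ) - d j + M))^(m+1)) atTop
        (nhds (∑ m ∈ Finset.range M, r^(m+1))) :=
      tendsto_finset_sum _ (fun m _ => hsj.pow (m+1))
    filter_upwards [hsum.eventually (eventually_gt_nhds hMa),
      hd.eventually (eventually_ge_atTop (M+1))] with j h1 h2
    have hd1 : 1 ≤ d j := hpos j
    have hdNj : d j ≤ N j := hdN j
    have hN1 : 1 ≤ N j := le_trans hd1 hdNj
    set k : ℕ := d j - 1 with hkdef
    set n : ℕ := N j - 1 with hndef
    have hkn : k ≤ n := by omega
    have hMk : M ≤ k := by omega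
    have hck : (k:ℝ) = (d j:ℝ) - 1 := by
      rw [hkdef, Nat.cast_sub hd1, Nat.cast_one]
    have hcn : (n:ℝ) = (N j:ℝ) - 1 := by
      rw [hndef, Nat.cast_sub hN1, Nat.cast_one]
    have hseq : ((k:ℝ)-M+1)/((n:ℝ)-k+M) = ((d j:ℝ) - M)/((N j:ℝ) - d j + M) := by
      rw [hck, hcn]; ring_nf
    have hlow := sum_lower n k M hkn hMk hM1
    rw [hseq] at hlow
    have hcpos : (0:ℝ) < (n.choose k : ℝ) := by exact_mod_cast Nat.choose_pos hkn
    rw [lt_div_iff₀ hcpos]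
    calc a * (n.choose k : ℝ)
        < (∑ m ∈ Finset.range M, (((d j:ℝ) - M)/((N j:ℝ) - d j + M))^(m+1)) * n.choose k :=
          mul_lt_mul_of_pos_right h1 hcpos
      _ ≤ _ := hlow
  · -- upper bound side
    intro a ha
    have hq : Tendsto (fun j => (((d j:ℝ) - 1)/((N j:ℝ) - d j + 1)) /
        (1 - ((d j:ℝ) - 1)/((N j:ℝ) - d j + 1))) atTop (nhds (r/(1-r))) :=
      hrj.div (tendsto_const_nhds.sub hrj) (by linarith)
    filter_upwards [hq.eventually (eventually_lt_nhds ha),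
      hrj.eventually (eventually_lt_nhds hr1),
      hd.eventually (eventually_ge_atTop 2)] with j h1 h2 h3
    have hd1 : 1 ≤ d j := hpos j
    have hdNj : d j ≤ N j := hdN j
    have hN1 : 1 ≤ N j := le_trans hd1 hdNj
    set k : ℕ := d j - 1 with hkdef
    set n : ℕ := N j - 1 with hndef
    have hkn : k ≤ n := by omega
    have hk1 : 1 ≤ k := by omega
    have hck : (k:ℝ) = (d j:ℝ) - 1 := by
      rw [hkdef, Nat.cast_sub hd1, Nat.cast_one]
    have hcn : (n:ℝ) = (N j:ℝ) - 1 := by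
      rw [hndef, Nat.cast_sub hN1, Nat.cast_one]
    have hreq : (k:ℝ)/((n:ℝ)-k+1) = ((d j:ℝ) - 1)/((N j:ℝ) - d j + 1) := by
      rw [hck, hcn]; ring_nf
    have hup := sum_upper n k hk1 hkn (by rw [hreq]; exact h2)
    rw [hreq] at hup
    have hcpos : (0:ℝ) < (n.choose k : ℝ) := by exact_mod_cast Nat.choose_pos hkn
    rw [div_lt_iff₀ hcpos]
    calc ∑ i ∈ Finset.range k, (n.choose i : ℝ)
        ≤ (((d j:ℝ) - 1)/((N j:ℝ) - d j + 1)) /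
            (1 - ((d j:ℝ) - 1)/((N j:ℝ) - d j + 1)) * n.choose k := hup
      _ < a * n.choose k := mul_lt_mul_of_pos_right h1 hcpos
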